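/- Monotonicity of collision relative entropy in the second argument: if σ′ ≥ σ ≥ 0 (in the Loewner order) and ρ is positive semi-definite with supp(ρ) ⊆ supp(σ), then tr[((σ′)^{-1/4} ρ (σ′)^{-1/4})²] ≤ tr[(σ^{-1/4} ρ σ^{-1/4})²], i.e., D₂(ρ‖σ′) ≤ D₂(ρ‖σ). -/

import Mathlib

open Matrix BigOperators ComplexOrder Kronecker

variable {n : Type*} [Fintype n] [DecidableEq n]

/-- Apply a real function to a matrix via its spectral decomposition (0 if not Hermitian). -/
noncomputable def mFun (f : ℝ → ℝ) (A : Matrix n n ℂ) : Matrix n n ℂ :=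
  if hA : A.IsHermitian then
    (hA.eigenvectorUnitary : Matrix n n ℂ) *
      Matrix.diagonal (fun i => (f (hA.eigenvalues i) : ℂ)) *
      star (hA.eigenvectorUnitary : Matrix n n ℂ)
  else 0

/-- Fractional power of the Moore–Penrose pseudoinverse type: `x ↦ x^r` on the support. -/
noncomputable def mpow (r : ℝ) (A : Matrix n n ℂ) : Matrix n n ℂ :=
  mFun (fun x => if x = 0 then 0 else x ^ r) A

/-- Projection onto nonnegative eigenspaces of a Hermitian matrix. -/
noncomputable def projNonneg (A : Matrix n n ℂ) : Matrix n n ℂ :=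
  mFun (fun x => if 0 ≤ x then 1 else 0) A

/-- Projection onto strictly positive eigenspaces of a Hermitian matrix. -/
noncomputable def projPos (A : Matrix n n ℂ) : Matrix n n ℂ :=
  mFun (fun x => if 0 < x then 1 else 0) A

/-- supp ρ ⊆ supp σ, phrased via kernels (for PSD matrices). -/
def suppLE (ρ σ : Matrix n n ℂ) : Prop :=
  ∀ v : n → ℂ, σ.mulVec v = 0 → ρ.mulVec v = 0

/-- Exponential of the collision relative entropy, exp D₂(ρ‖σ) = tr[(σ^{-1/4} ρ σ^{-1/4})²]. -/
noncomputable def expD2 (ρ σ : Matrix n n ℂ) : ℝ :=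
  (((mpow (-(4:ℝ)⁻¹) σ) * ρ * (mpow (-(4:ℝ)⁻¹) σ)) ^ 2).trace.re

/-- Collision relative entropy (base 2). -/
noncomputable def D2 (ρ σ : Matrix n n ℂ) : ℝ := Real.logb 2 (expD2 ρ σ)

/-- Information spectrum relative entropy. -/
noncomputable def Ds (ε : ℝ) (ρ σ : Matrix n n ℂ) : ℝ :=
  sSup {R : ℝ | Complex.re (Matrix.trace (ρ * projNonneg ((2:ℝ)^R • σ - ρ))) ≤ ε}

/-- Density matrix. -/
def IsDensity (ρ : Matrix n n ℂ) : Prop := ρ.PosSemidef ∧ ρ.trace = 1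

section Helpers
variable {n : Type*} [Fintype n] [DecidableEq n]

lemma mFun_eq {A : Matrix n n ℂ} (hA : A.IsHermitian) (f : ℝ → ℝ) :
    mFun f A = (hA.eigenvectorUnitary : Matrix n n ℂ) *
      Matrix.diagonal (fun i => (f (hA.eigenvalues i) : ℂ)) *
      star (hA.eigenvectorUnitary : Matrix n n ℂ) := by
  unfold mFun
  rw [dif_pos hA]

lemma eigU_star_mul {A : Matrix n n ℂ} (hA : A.IsHermitian) :
    star (hA.eigenvectorUnitary : Matrix n n ℂ) * (hA.eigenvectorUnitary : Matrix n n ℂ) = 1 := by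
  simpa using unitary.coe_star_mul_self hA.eigenvectorUnitary

lemma eigU_mul_star {A : Matrix n n ℂ} (hA : A.IsHermitian) :
    (hA.eigenvectorUnitary : Matrix n n ℂ) * star (hA.eigenvectorUnitary : Matrix n n ℂ) = 1 := by
  simpa using unitary.coe_mul_star_self hA.eigenvectorUnitary

lemma eigU_spec {A : Matrix n n ℂ} (hA : A.IsHermitian) :
    (hA.eigenvectorUnitary : Matrix n n ℂ) * Matrix.diagonal (RCLike.ofReal ∘ hA.eigenvalues) *
      star (hA.eigenvectorUnitary : Matrix n n ℂ) = A := by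
  have h := hA.spectral_theorem
  rw [Unitary.conjStarAlgAut_apply] at h
  exact h.symm

lemma mFun_isHermitian (f : ℝ → ℝ) (A : Matrix n n ℂ) : (mFun f A).IsHermitian := by
  by_cases hA : A.IsHermitian
  · rw [mFun_eq hA]
    have hd : (Matrix.diagonal (fun i => (f (hA.eigenvalues i) : ℂ))).IsHermitian := by
      apply Matrix.isHermitian_diagonal_of_self_adjoint
      funext i
      simp [_root_.IsSelfAdjoint, Complex.conj_ofReal]
    simpa [Matrix.star_eq_conjTranspose] using Matrix.isHermitian_mul_mul_conjTranspose
      (hA.eigenvectorUnitary : Matrix n n ℂ) hd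
  · unfold mFun
    rw [dif_neg hA]
    exact Matrix.isHermitian_zero

lemma mFun_mul {A : Matrix n n ℂ} (hA : A.IsHermitian) (f g : ℝ → ℝ) :
    mFun f A * mFun g A = mFun (fun x => f x * g x) A := by
  rw [mFun_eq hA f, mFun_eq hA g, mFun_eq hA]
  rw [show ∀ (U D1 D2 V : Matrix n n ℂ), U * D1 * V * (U * D2 * V) = U * D1 * (V * U) * D2 * V by
    intros; noncomm_ring]
  rw [eigU_star_mul hA]  -- V * U where V = star U
  simp [Matrix.diagonal_mul_diagonal, mul_assoc]

lemma mFun_congr {A : Matrix n n ℂ} (hA : A.IsHermitian) {f g : ℝ → ℝ}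
    (h : ∀ i, f (hA.eigenvalues i) = g (hA.eigenvalues i)) : mFun f A = mFun g A := by
  rw [mFun_eq hA, mFun_eq hA]
  have : (fun i => (f (hA.eigenvalues i) : ℂ)) = fun i => (g (hA.eigenvalues i) : ℂ) :=
    funext fun i => by rw [h i]
  rw [this]

lemma mFun_one {A : Matrix n n ℂ} (hA : A.IsHermitian) : mFun (fun _ => 1) A = 1 := by
  rw [mFun_eq hA]
  simp [eigU_mul_star hA]

lemma mFun_posSemidef {A : Matrix n n ℂ} (hA : A.IsHermitian) {f : ℝ → ℝ}
    (h : ∀ i, 0 ≤ f (hA.eigenvalues i)) : (mFun f A).PosSemidef := by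
  rw [mFun_eq hA]
  have hd : (Matrix.diagonal (fun i => (f (hA.eigenvalues i) : ℂ))).PosSemidef :=
    Matrix.PosSemidef.diagonal (fun i => Complex.zero_le_real.mpr (h i))
  simpa [Matrix.star_eq_conjTranspose] using hd.mul_mul_conjTranspose_same (hA.eigenvectorUnitary : Matrix n n ℂ)

lemma mFun_addConst {A : Matrix n n ℂ} (hA : A.IsHermitian) (ε : ℝ) :
    mFun (fun x => x + ε) A = A + (ε : ℂ) • 1 := by
  rw [mFun_eq hA]
  have : (Matrix.diagonal (fun i => ((hA.eigenvalues i + ε : ℝ) : ℂ)))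
      = Matrix.diagonal (RCLike.ofReal ∘ hA.eigenvalues) + (ε : ℂ) • 1 := by
    rw [Matrix.smul_one_eq_diagonal, Matrix.diagonal_add]
    congr 1
    funext i
    push_cast
    rfl
  rw [this, mul_add, add_mul]
  rw [eigU_spec hA]
  congr 1
  simp [Matrix.smul_mul, Matrix.mul_smul, eigU_mul_star hA]

namespace Matrix.PosSemidef

noncomputable def sqrt {A : Matrix n n ℂ} (hA : A.PosSemidef) : Matrix n n ℂ :=
  mFun (fun x => Real.sqrt x) A

lemma posSemidef_sqrt {A : Matrix n n ℂ} (hA : A.PosSemidef) : hA.sqrt.PosSemidef :=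
  mFun_posSemidef hA.isHermitian (fun _ => Real.sqrt_nonneg _)

lemma sqrt_mul_self {A : Matrix n n ℂ} (hA : A.PosSemidef) : hA.sqrt * hA.sqrt = A := by
  unfold sqrt
  rw [mFun_mul hA.isHermitian, mFun_congr hA.isHermitian (g := fun x => x + 0)
    (fun i => by simp [Real.mul_self_sqrt (hA.eigenvalues_nonneg i)]), mFun_addConst hA.isHermitian]
  simp

end Matrix.PosSemidef

lemma mFun_mulVec_basis {A : Matrix n n ℂ} (hA : A.IsHermitian) (f : ℝ → ℝ) (j : n) :
    mFun f A *ᵥ ⇑(hA.eigenvectorBasis j) = (f (hA.eigenvalues j) : ℂ) • ⇑(hA.eigenvectorBasis j) := by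
  rw [mFun_eq hA, ← Matrix.IsHermitian.eigenvectorUnitary_mulVec hA j,
    Matrix.mulVec_mulVec, mul_assoc, eigU_star_mul hA, mul_one, ← Matrix.mulVec_mulVec,
    Matrix.diagonal_mulVec_single, ← Matrix.mulVec_smul]
  funext k
  simp [Matrix.mulVec, dotProduct, Pi.single_apply, mul_comm, Finset.sum_ite_eq,
    Matrix.IsHermitian.eigenvectorUnitary_apply]


lemma dot_conj (B C : Matrix n n ℂ) (v : n → ℂ) :
    dotProduct (star v) ((Bᴴ * C * B) *ᵥ v)
      = dotProduct (star (B *ᵥ v)) (C *ᵥ (B *ᵥ v)) := by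
  rw [Matrix.star_mulVec, ← Matrix.mulVec_mulVec, ← Matrix.mulVec_mulVec,
    dotProduct_mulVec (star v) Bᴴ, ← Matrix.star_mulVec]

lemma dot_sq (B : Matrix n n ℂ) (v : n → ℂ) :
    dotProduct (star v) ((Bᴴ * B) *ᵥ v)
      = dotProduct (star (B *ᵥ v)) (B *ᵥ v) := by
  have := dot_conj B 1 v
  simpa using this

lemma dot_star_self_ofReal (u : n → ℂ) :
    dotProduct (star u) u = ((∑ i, Complex.normSq (u i) : ℝ) : ℂ) := by
  rw [dotProduct]
  push_cast
  congr 1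
  funext i
  simp [Complex.normSq_eq_conj_mul_self]

lemma psd_mulVec_eq_zero {A : Matrix n n ℂ} (hA : A.PosSemidef) {x : n → ℂ}
    (h : dotProduct (star x) (A *ᵥ x) = 0) : A *ᵥ x = 0 := by
  have hs : hA.sqrt *ᵥ x = 0 := by
    have h2 : dotProduct (star (hA.sqrt *ᵥ x)) (hA.sqrt *ᵥ x) = 0 := by
      rw [← dot_sq, hA.posSemidef_sqrt.isHermitian.eq, hA.sqrt_mul_self, h]
    exact dotProduct_star_self_eq_zero.mp h2
  calc A *ᵥ x = hA.sqrt *ᵥ (hA.sqrt *ᵥ x) := by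
        rw [Matrix.mulVec_mulVec, hA.sqrt_mul_self]
    _ = 0 := by rw [hs, Matrix.mulVec_zero]

lemma psd_le_mulVec_zero {σ σ' : Matrix n n ℂ} (hσ : σ.PosSemidef)
    (hle : (σ' - σ).PosSemidef) {x : n → ℂ} (h : σ' *ᵥ x = 0) : σ *ᵥ x = 0 := by
  apply psd_mulVec_eq_zero hσ
  have h1 := hσ.dotProduct_mulVec_nonneg x
  have h2 := hle.dotProduct_mulVec_nonneg x
  rw [Matrix.sub_mulVec, dotProduct_sub, h, dotProduct_zero, zero_sub,
    neg_nonneg] at h2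
  exact le_antisymm h2 h1

lemma one_sub_posSemidef {H : Matrix n n ℂ} (hH : H.IsHermitian)
    (h : ∀ i, hH.eigenvalues i ≤ 1) : (1 - H).PosSemidef := by
  have key : 1 - H = mFun (fun x => 1 - x) H := by
    rw [mFun_eq hH]
    have hd : (Matrix.diagonal (fun i => ((1 - hH.eigenvalues i : ℝ) : ℂ)))
        = 1 - Matrix.diagonal (RCLike.ofReal ∘ hH.eigenvalues) := by
      rw [← Matrix.diagonal_one, Matrix.diagonal_sub]
      congr 1
      funext i
      push_cast
      rfl
    rw [hd, mul_sub, mul_one, sub_mul, eigU_mul_star hH]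
    congr 1
    exact (eigU_spec hH).symm
  rw [key]
  exact mFun_posSemidef hH (fun i => sub_nonneg.mpr (h i))

lemma quad_mFun {A R : Matrix n n ℂ} (hA : A.IsHermitian) (hR : R.IsHermitian)
    (f : ℝ → ℝ) (v : n → ℂ) :
    dotProduct (star v) ((R * mFun f A * R) *ᵥ v)
      = ((∑ i, f (hA.eigenvalues i) *
          Complex.normSq (dotProduct (star (R *ᵥ ⇑(hA.eigenvectorBasis i))) v) : ℝ) : ℂ) := by
  set U : Matrix n n ℂ := (hA.eigenvectorUnitary : Matrix n n ℂ) with hU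
  have hB : R * mFun f A * R
      = (star U * R)ᴴ * Matrix.diagonal (fun i => (f (hA.eigenvalues i) : ℂ)) * (star U * R) := by
    rw [mFun_eq hA]
    have h1 : (star U * R)ᴴ = R * U := by
      rw [Matrix.conjTranspose_mul, Matrix.star_eq_conjTranspose,
        Matrix.conjTranspose_conjTranspose, hR.eq]
    rw [h1, hU]
    noncomm_ring
  rw [hB, dot_conj]
  set w := (star U * R) *ᵥ v with hwdef
  have hw : ∀ i, w i = dotProduct (star (R *ᵥ ⇑(hA.eigenvectorBasis i))) v := by
    intro i
    rw [Matrix.star_mulVec, hR.eq, ← dotProduct_mulVec, hwdef, ← Matrix.mulVec_mulVec]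
    simp [Matrix.mulVec, dotProduct, Matrix.star_apply,
      Matrix.IsHermitian.eigenvectorUnitary_apply, hU]
  have step1 : dotProduct (star w)
        (Matrix.diagonal (fun i => (f (hA.eigenvalues i) : ℂ)) *ᵥ w)
      = ∑ i, ((f (hA.eigenvalues i) * Complex.normSq (w i) : ℝ) : ℂ) := by
    rw [dotProduct]
    apply Finset.sum_congr rfl
    intro i _
    rw [Matrix.mulVec_diagonal]
    simp only [Pi.star_apply, Complex.star_def]
    push_cast
    rw [show (starRingEnd ℂ) (w i) * ((f (hA.eigenvalues i) : ℂ) * w i)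
        = (f (hA.eigenvalues i) : ℂ) * ((starRingEnd ℂ) (w i) * w i) by ring,
      ← Complex.normSq_eq_conj_mul_self]
  rw [step1]
  push_cast
  apply Finset.sum_congr rfl
  intro i _
  rw [hw i]

lemma trace_sq_re_eq {N : Matrix n n ℂ} (hN : N.IsHermitian) :
    ((N ^ 2).trace).re = ∑ j, ∑ i, Complex.normSq (N i j) := by
  have : N ^ 2 = Nᴴ * N := by rw [hN.eq, pow_two]
  rw [this, Matrix.trace, Complex.re_sum]
  congr 1
  funext j
  rw [Matrix.diag_apply, Matrix.mul_apply, Complex.re_sum]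
  congr 1
  funext i
  simp [Matrix.conjTranspose_apply, Complex.normSq_apply]

lemma psd_trace_re_nonneg {M : Matrix n n ℂ} (hM : M.PosSemidef) : 0 ≤ M.trace.re := by
  rw [Matrix.trace, Complex.re_sum]
  apply Finset.sum_nonneg
  intro i _
  have h := hM.dotProduct_mulVec_nonneg (Pi.single i 1)
  have hd : dotProduct (star (Pi.single i (1:ℂ))) (M *ᵥ Pi.single i 1) = M i i := by
    simp [Matrix.mulVec_single, dotProduct, Pi.single_apply, apply_ite, mul_ite, ite_mul,
      Finset.sum_ite_eq]
  rw [hd] at h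
  exact (Complex.le_def.mp h).1

lemma trace_mul_re_nonneg {X Y : Matrix n n ℂ} (hX : X.PosSemidef) (hY : Y.PosSemidef) :
    0 ≤ ((X * Y).trace).re := by
  have h1 : X * Y = hX.sqrt * (hX.sqrt * Y) := by
    rw [← mul_assoc, hX.sqrt_mul_self]
  rw [h1, Matrix.trace_mul_comm]
  have h2 : (hX.sqrt * Y * hX.sqrt).PosSemidef := by
    have := hY.mul_mul_conjTranspose_same hX.sqrt
    rwa [hX.posSemidef_sqrt.isHermitian.eq] at this
  exact psd_trace_re_nonneg h2

lemma trace_sq_mono {A B : Matrix n n ℂ} (hA : A.PosSemidef) (hB : B.PosSemidef)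
    (hBA : (B - A).PosSemidef) : ((A ^ 2).trace).re ≤ ((B ^ 2).trace).re := by
  have key : B ^ 2 - A ^ 2 = (B - A) * B + A * (B - A) := by noncomm_ring
  have h1 := trace_mul_re_nonneg hBA hB
  have h2 := trace_mul_re_nonneg hA hBA
  have h3 : ((B ^ 2 - A ^ 2).trace).re = ((B^2).trace).re - ((A^2).trace).re := by
    rw [Matrix.trace_sub, Complex.sub_re]
  have h4 : ((B ^ 2 - A ^ 2).trace).re = (((B - A) * B).trace).re + ((A * (B - A)).trace).re := by
    rw [key, Matrix.trace_add, Complex.add_re]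
  linarith


lemma antitone_eps {σ σ' : Matrix n n ℂ} (hσ : σ.PosSemidef) (hσ' : σ'.PosSemidef)
    (hle : (σ' - σ).PosSemidef) {ε : ℝ} (hε : 0 < ε) :
    (mFun (fun x => (x + ε) ^ (-(2:ℝ)⁻¹)) σ - mFun (fun x => (x + ε) ^ (-(2:ℝ)⁻¹)) σ').PosSemidef := by
  have hσH := hσ.1
  have hσ'H := hσ'.1
  have hpos : ∀ i, 0 < hσH.eigenvalues i + ε := fun i => by
    have := hσ.eigenvalues_nonneg i; linarith
  have hpos' : ∀ i, 0 < hσ'H.eigenvalues i + ε := fun i => by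
    have := hσ'.eigenvalues_nonneg i; linarith
  set Ta := mFun (fun x => (x + ε) ^ ((4:ℝ)⁻¹)) σ with hTadef
  set Ta' := mFun (fun x => (x + ε) ^ (-(4:ℝ)⁻¹)) σ with hTa'def
  set Sb := mFun (fun x => (x + ε) ^ (-(2:ℝ)⁻¹)) σ' with hSbdef
  have hTaH : Ta.IsHermitian := mFun_isHermitian _ _
  have hTa'H : Ta'.IsHermitian := mFun_isHermitian _ _
  have hSbH : Sb.IsHermitian := mFun_isHermitian _ _
  have hTaTa' : Ta * Ta' = 1 := by
    rw [hTadef, hTa'def, mFun_mul hσH,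
      mFun_congr hσH (g := fun _ => 1)
        (fun i => by rw [← Real.rpow_add (hpos i)]; norm_num)]
    exact mFun_one hσH
  have hTa'Ta : Ta' * Ta = 1 := by
    rw [hTadef, hTa'def, mFun_mul hσH,
      mFun_congr hσH (g := fun _ => 1)
        (fun i => by rw [← Real.rpow_add (hpos i)]; norm_num)]
    exact mFun_one hσH
  have hTa'Ta' : Ta' * Ta' = mFun (fun x => (x + ε) ^ (-(2:ℝ)⁻¹)) σ := by
    rw [hTa'def, mFun_mul hσH]
    apply mFun_congr hσH
    intro i
    rw [← Real.rpow_add (hpos i)]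
    norm_num
  have hTa4 : Ta * Ta * (Ta * Ta) = σ + (ε:ℂ) • 1 := by
    have h2 : Ta * Ta = mFun (fun x => (x + ε) ^ ((4:ℝ)⁻¹) * (x + ε) ^ ((4:ℝ)⁻¹)) σ := by
      rw [hTadef]; exact mFun_mul hσH _ _
    rw [h2, mFun_mul hσH,
      mFun_congr hσH (g := fun x => x + ε)
        (fun i => by
          rw [← Real.rpow_add (hpos i), ← Real.rpow_add (hpos i)]
          show _ ^ ((4:ℝ)⁻¹ + 4⁻¹ + (4⁻¹ + 4⁻¹)) = hσH.eigenvalues i + ε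
          rw [show (4:ℝ)⁻¹ + 4⁻¹ + (4⁻¹ + 4⁻¹) = 1 by norm_num, Real.rpow_one])]
    exact mFun_addConst hσH ε
  have hSbσ'Sb : Sb * (σ' + (ε:ℂ) • 1) * Sb = 1 := by
    rw [← mFun_addConst hσ'H ε, hSbdef, mFun_mul hσ'H, mFun_mul hσ'H,
      mFun_congr hσ'H (g := fun _ => 1) (fun i => ?_)]
    · exact mFun_one hσ'H
    · have ha := hpos' i
      have h1 : ((hσ'H.eigenvalues i + ε) ^ (-(2:ℝ)⁻¹)) * ((hσ'H.eigenvalues i + ε) ^ (-(2:ℝ)⁻¹))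
          = (hσ'H.eigenvalues i + ε)⁻¹ := by
        rw [← Real.rpow_add ha]
        norm_num [Real.rpow_neg_one]
      have h2 : (hσ'H.eigenvalues i + ε) ^ (-(2:ℝ)⁻¹) * (hσ'H.eigenvalues i + ε)
            * (hσ'H.eigenvalues i + ε) ^ (-(2:ℝ)⁻¹)
          = (hσ'H.eigenvalues i + ε) * (((hσ'H.eigenvalues i + ε) ^ (-(2:ℝ)⁻¹))
            * ((hσ'H.eigenvalues i + ε) ^ (-(2:ℝ)⁻¹))) := by ring
      rw [h2, h1, mul_inv_cancel₀ ha.ne']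
  have hSbPSD : Sb.PosSemidef := by
    rw [hSbdef]
    exact mFun_posSemidef hσ'H (fun i => Real.rpow_nonneg (le_of_lt (hpos' i)) _)
  have hM : (Ta * Sb * Ta).PosSemidef := by
    have := hSbPSD.mul_mul_conjTranspose_same Ta
    rwa [hTaH.eq] at this
  have heig : ∀ i, hM.1.eigenvalues i ≤ 1 := by
    intro i
    have hμ0 : 0 ≤ hM.1.eigenvalues i := hM.eigenvalues_nonneg i
    set μ : ℝ := hM.1.eigenvalues i with hμdef
    set w : n → ℂ := ⇑(hM.1.eigenvectorBasis i) with hwdef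
    have hw0 : w ≠ 0 := by
      intro h
      have hb : hM.1.eigenvectorBasis i = 0 := by
        apply (WithLp.equiv 2 ((_ : n) → ℂ)).injective
        simpa [hwdef] using h
      exact hM.1.eigenvectorBasis.toBasis.ne_zero i (by simpa using hb)
    have hMw : (Ta * Sb * Ta) *ᵥ w = (μ : ℂ) • w := by
      have h1 := hM.1.mulVec_eigenvectorBasis i
      have h2 : (μ : ℝ) • w = (μ : ℂ) • w := by
        funext k; simp [Complex.real_smul]
      rw [← h2]
      exact h1
    set u := Ta *ᵥ w with hudef
    have hu0 : u ≠ 0 := by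
      intro h
      apply hw0
      have h1 : (Ta' * Ta) *ᵥ w = Ta' *ᵥ u := by rw [← Matrix.mulVec_mulVec]
      rw [hTa'Ta, Matrix.one_mulVec, h] at h1
      rw [h1, Matrix.mulVec_zero]
    have hCu : (Ta * Ta * Sb) *ᵥ u = (μ:ℂ) • u := by
      rw [hudef, Matrix.mulVec_mulVec,
        show Ta * Ta * Sb * Ta = Ta * (Ta * Sb * Ta) by noncomm_ring,
        ← Matrix.mulVec_mulVec, hMw, Matrix.mulVec_smul]
    have hCt : (Ta * Ta * Sb)ᴴ = Sb * (Ta * Ta) := by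
      simp [Matrix.conjTranspose_mul, hTaH.eq, hSbH.eq, mul_assoc]
    have hCC : (Ta * Ta * Sb)ᴴ * (Ta * Ta * Sb) = Sb * (σ + (ε:ℂ) • 1) * Sb := by
      rw [hCt, show Sb * (Ta * Ta) * (Ta * Ta * Sb)
          = Sb * (Ta * Ta * (Ta * Ta)) * Sb by noncomm_ring, hTa4]
    have hkey : (1 - (Ta * Ta * Sb)ᴴ * (Ta * Ta * Sb)).PosSemidef := by
      have e1 : 1 - Sb * (σ + (ε:ℂ) • 1) * Sb = Sb * (σ' - σ) * Sb :=
        calc 1 - Sb * (σ + (ε:ℂ) • 1) * Sb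
            = Sb * (σ' + (ε:ℂ) • 1) * Sb - Sb * (σ + (ε:ℂ) • 1) * Sb := by rw [hSbσ'Sb]
          _ = Sb * (σ' - σ) * Sb := by noncomm_ring
      rw [hCC, e1]
      have := hle.mul_mul_conjTranspose_same Sb
      rwa [hSbH.eq] at this
    have h0 := hkey.dotProduct_mulVec_nonneg u
    rw [Matrix.sub_mulVec, dotProduct_sub, Matrix.one_mulVec, dot_sq, hCu,
      star_smul, smul_dotProduct, dotProduct_smul,
      dot_star_self_ofReal] at h0
    set Su : ℝ := ∑ k, Complex.normSq (u k) with hSudef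
    have hSu : 0 < Su := by
      obtain ⟨k, hk⟩ := Function.ne_iff.mp hu0
      apply Finset.sum_pos' (fun j _ => Complex.normSq_nonneg _)
      exact ⟨k, Finset.mem_univ k, Complex.normSq_pos.mpr hk⟩
    have h0' : (0:ℂ) ≤ ((Su - μ * μ * Su : ℝ) : ℂ) := by
      convert h0 using 1
      simp only [smul_eq_mul, Complex.star_def, Complex.conj_ofReal]
      push_cast
      ring
    have h0r : 0 ≤ Su - μ * μ * Su := Complex.zero_le_real.mp h0'
    have hμ2 : μ * μ ≤ 1 := by
      by_contra hc
      push_neg at hc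
      nlinarith [mul_lt_mul_of_pos_left hc hSu]
    nlinarith [mul_self_nonneg (μ - 1), hμ2, hμ0]
  have h1M : (1 - Ta * Sb * Ta).PosSemidef := one_sub_posSemidef hM.1 heig
  have hfin : Ta' * (1 - Ta * Sb * Ta) * Ta' = mFun (fun x => (x + ε) ^ (-(2:ℝ)⁻¹)) σ - Sb := by
    rw [mul_sub, mul_one, sub_mul, hTa'Ta',
      show Ta' * (Ta * Sb * Ta) * Ta' = Ta' * Ta * Sb * (Ta * Ta') by noncomm_ring,
      hTa'Ta, hTaTa', one_mul, mul_one]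
  rw [← hfin]
  have := h1M.mul_mul_conjTranspose_same Ta'
  rwa [hTa'H.eq] at this


lemma sqrt_mulVec_zero {ρ : Matrix n n ℂ} (hρ : ρ.PosSemidef) {x : n → ℂ}
    (h : ρ *ᵥ x = 0) : hρ.sqrt *ᵥ x = 0 := by
  apply dotProduct_star_self_eq_zero.mp
  rw [← dot_sq, hρ.posSemidef_sqrt.isHermitian.eq, hρ.sqrt_mul_self, h, dotProduct_zero]

lemma tendsto_sum_eps (lam : n → ℝ) (c : n → ℝ) (hlam : ∀ i, 0 ≤ lam i)
    (hc : ∀ i, lam i = 0 → c i = 0) :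
    Filter.Tendsto (fun ε : ℝ => ∑ i, (lam i + ε) ^ (-(2:ℝ)⁻¹) * c i)
      (nhdsWithin 0 (Set.Ioi 0))
      (nhds (∑ i, (if lam i = 0 then (0:ℝ) else (lam i) ^ (-(2:ℝ)⁻¹)) * c i)) := by
  apply tendsto_finset_sum
  intro i _
  by_cases h : lam i = 0
  · simpa [h, hc i h] using (tendsto_const_nhds :
      Filter.Tendsto (fun _ : ℝ => (0:ℝ)) (nhdsWithin 0 (Set.Ioi 0)) (nhds 0))
  · have hl : 0 < lam i := lt_of_le_of_ne (hlam i) (Ne.symm h)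
    rw [if_neg h]
    have hcont : ContinuousAt (fun ε : ℝ => (lam i + ε) ^ (-(2:ℝ)⁻¹) * c i) 0 := by
      apply ContinuousAt.mul _ continuousAt_const
      have h1 : ContinuousAt (fun y : ℝ => y ^ (-(2:ℝ)⁻¹)) (lam i + 0) :=
        Real.continuousAt_rpow_const _ _ (Or.inl (by simp [h]))
      exact h1.comp ((continuous_const.add continuous_id).continuousAt)
    have := hcont.tendsto.mono_left (nhdsWithin_le_nhds (s := Set.Ioi (0:ℝ)))
    simpa using this

lemma key_psd {ρ σ σ' : Matrix n n ℂ}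
    (hρ : ρ.PosSemidef) (hσ : σ.PosSemidef) (hσ' : σ'.PosSemidef)
    (hle : (σ' - σ).PosSemidef) (hsupp : suppLE ρ σ) :
    (hρ.sqrt * mpow (-(2:ℝ)⁻¹) σ * hρ.sqrt
      - hρ.sqrt * mpow (-(2:ℝ)⁻¹) σ' * hρ.sqrt).PosSemidef := by
  set R := hρ.sqrt with hRdef
  have hRH : R.IsHermitian := hρ.posSemidef_sqrt.isHermitian
  have hRu : ∀ i, hσ.1.eigenvalues i = 0 → R *ᵥ ⇑(hσ.1.eigenvectorBasis i) = 0 := by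
    intro i h
    apply sqrt_mulVec_zero hρ
    apply hsupp
    rw [hσ.1.mulVec_eigenvectorBasis i, h, zero_smul]
  have hRu' : ∀ i, hσ'.1.eigenvalues i = 0 → R *ᵥ ⇑(hσ'.1.eigenvectorBasis i) = 0 := by
    intro i h
    apply sqrt_mulVec_zero hρ
    apply hsupp
    apply psd_le_mulVec_zero hσ hle
    rw [hσ'.1.mulVec_eigenvectorBasis i, h, zero_smul]
  have herm : ∀ (τ : Matrix n n ℂ) (hτ : τ.IsHermitian) (f : ℝ → ℝ),
      (R * mFun f τ * R).IsHermitian := by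
    intro τ hτ f
    have := Matrix.isHermitian_mul_mul_conjTranspose R (mFun_isHermitian f τ)
    rwa [hRH.eq] at this
  refine Matrix.PosSemidef.of_dotProduct_mulVec_nonneg ?_ ?_
  · exact ((herm σ hσ.1 _).sub (herm σ' hσ'.1 _))
  · intro v
    show (0:ℂ) ≤ _
    rw [show mpow (-(2:ℝ)⁻¹) σ = mFun (fun x => if x = 0 then 0 else x ^ (-(2:ℝ)⁻¹)) σ from rfl,
      show mpow (-(2:ℝ)⁻¹) σ' = mFun (fun x => if x = 0 then 0 else x ^ (-(2:ℝ)⁻¹)) σ' from rfl,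
      Matrix.sub_mulVec, dotProduct_sub, quad_mFun hσ.1 hRH, quad_mFun hσ'.1 hRH,
      ← Complex.ofReal_sub, Complex.zero_le_real, sub_nonneg]
    set c : n → ℝ := fun i =>
      Complex.normSq (dotProduct (star (R *ᵥ ⇑(hσ.1.eigenvectorBasis i))) v) with hcdef
    set c' : n → ℝ := fun i =>
      Complex.normSq (dotProduct (star (R *ᵥ ⇑(hσ'.1.eigenvectorBasis i))) v) with hc'def
    have hc0 : ∀ i, hσ.1.eigenvalues i = 0 → c i = 0 := by
      intro i h
      rw [hcdef]
      simp [hRu i h]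
    have hc0' : ∀ i, hσ'.1.eigenvalues i = 0 → c' i = 0 := by
      intro i h
      rw [hc'def]
      simp [hRu' i h]
    have hF : ∀ ε ∈ Set.Ioi (0:ℝ),
        (∑ i, (hσ'.1.eigenvalues i + ε) ^ (-(2:ℝ)⁻¹) * c' i)
          ≤ ∑ i, (hσ.1.eigenvalues i + ε) ^ (-(2:ℝ)⁻¹) * c i := by
      intro ε hε
      have hps := antitone_eps hσ hσ' hle (Set.mem_Ioi.mp hε)
      have hps2 : (R * mFun (fun x => (x + ε) ^ (-(2:ℝ)⁻¹)) σ * R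
          - R * mFun (fun x => (x + ε) ^ (-(2:ℝ)⁻¹)) σ' * R).PosSemidef := by
        have h1 := hps.mul_mul_conjTranspose_same R
        rwa [hRH.eq, mul_sub, sub_mul] at h1
      have h2 := hps2.dotProduct_mulVec_nonneg v
      rw [Matrix.sub_mulVec, dotProduct_sub, quad_mFun hσ.1 hRH, quad_mFun hσ'.1 hRH,
        ← Complex.ofReal_sub, Complex.zero_le_real, sub_nonneg] at h2
      exact h2
    have hG := tendsto_sum_eps (hσ.1.eigenvalues) c (hσ.eigenvalues_nonneg) hc0
    have hG' := tendsto_sum_eps (hσ'.1.eigenvalues) c' (hσ'.eigenvalues_nonneg) hc0'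
    exact le_of_tendsto_of_tendsto hG' hG
      (Filter.eventually_inf_principal.mpr (Filter.Eventually.of_forall hF))


lemma mpow_sq {σ : Matrix n n ℂ} (hσ : σ.PosSemidef) :
    mpow (-(4:ℝ)⁻¹) σ * mpow (-(4:ℝ)⁻¹) σ = mpow (-(2:ℝ)⁻¹) σ := by
  show mFun _ σ * mFun _ σ = mFun _ σ
  rw [mFun_mul hσ.1]
  apply mFun_congr hσ.1
  intro i
  by_cases h : hσ.1.eigenvalues i = 0
  · simp [h]
  · have hl : 0 < hσ.1.eigenvalues i := lt_of_le_of_ne (hσ.eigenvalues_nonneg i) (Ne.symm h)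
    simp only [if_neg h]
    rw [← Real.rpow_add hl]
    norm_num

lemma mpow_posSemidef {σ : Matrix n n ℂ} (hσ : σ.PosSemidef) (r : ℝ) :
    (mpow r σ).PosSemidef := by
  apply mFun_posSemidef hσ.1
  intro i
  by_cases h : hσ.1.eigenvalues i = 0
  · simp [h]
  · simp only [if_neg h]
    exact Real.rpow_nonneg (hσ.eigenvalues_nonneg i) _

lemma expD2_eq {ρ σ : Matrix n n ℂ} (hρ : ρ.PosSemidef) (hσ : σ.PosSemidef) :
    expD2 ρ σ = (((hρ.sqrt * mpow (-(2:ℝ)⁻¹) σ * hρ.sqrt) ^ 2).trace).re := by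
  unfold expD2
  set S := mpow (-(4:ℝ)⁻¹) σ with hSdef
  set R := hρ.sqrt with hRdef
  set T := mpow (-(2:ℝ)⁻¹) σ with hTdef
  have hSS : S * S = T := mpow_sq hσ
  have hRR : R * R = ρ := hρ.sqrt_mul_self
  have lhs_eq : ((S * ρ * S) ^ 2).trace = (ρ * T * ρ * T).trace := by
    rw [pow_two, show S * ρ * S * (S * ρ * S) = S * (ρ * (S * S) * ρ * S) by noncomm_ring,
      Matrix.trace_mul_comm,
      show ρ * (S * S) * ρ * S * S = ρ * (S * S) * ρ * (S * S) by noncomm_ring, hSS]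
  have rhs_eq : ((R * T * R) ^ 2).trace = (ρ * T * ρ * T).trace := by
    rw [pow_two, show R * T * R * (R * T * R) = R * (T * (R * R) * T * R) by noncomm_ring,
      Matrix.trace_mul_comm,
      show T * (R * R) * T * R * R = T * (R * R) * T * (R * R) by noncomm_ring, hRR,
      Matrix.trace_mul_comm, show ρ * (T * ρ * T) = ρ * T * ρ * T by noncomm_ring]
  rw [lhs_eq, rhs_eq]

lemma expD2_nonneg {ρ σ : Matrix n n ℂ} (hρ : ρ.PosSemidef) (hσ : σ.PosSemidef) :
    0 ≤ expD2 ρ σ := by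
  unfold expD2
  have hN : (mpow (-(4:ℝ)⁻¹) σ * ρ * mpow (-(4:ℝ)⁻¹) σ).PosSemidef := by
    have := hρ.mul_mul_conjTranspose_same (mpow (-(4:ℝ)⁻¹) σ)
    rwa [(mpow_posSemidef hσ _).isHermitian.eq] at this
  rw [trace_sq_re_eq hN.isHermitian]
  exact Finset.sum_nonneg fun j _ => Finset.sum_nonneg fun i _ => Complex.normSq_nonneg _

end Helpers
/-- monotonicity of collision relative entropy in the second argument. -/
theorem collision_monotone_second (ρ σ σ' : Matrix n n ℂ)
    (hρ : ρ.PosSemidef) (hσ : σ.PosSemidef) (hσ' : σ'.PosSemidef)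
    (hle : (σ' - σ).PosSemidef) (hsupp : suppLE ρ σ) :
    expD2 ρ σ' ≤ expD2 ρ σ ∧ D2 ρ σ' ≤ D2 ρ σ := by
  have hRH : (hρ.sqrt).IsHermitian := hρ.posSemidef_sqrt.isHermitian
  have hRT'R : (hρ.sqrt * mpow (-(2:ℝ)⁻¹) σ' * hρ.sqrt).PosSemidef := by
    have := (mpow_posSemidef hσ' (-(2:ℝ)⁻¹)).mul_mul_conjTranspose_same hρ.sqrt
    rwa [hRH.eq] at this
  have hRTR : (hρ.sqrt * mpow (-(2:ℝ)⁻¹) σ * hρ.sqrt).PosSemidef := by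
    have := (mpow_posSemidef hσ (-(2:ℝ)⁻¹)).mul_mul_conjTranspose_same hρ.sqrt
    rwa [hRH.eq] at this
  have hfirst : expD2 ρ σ' ≤ expD2 ρ σ := by
    rw [expD2_eq hρ hσ, expD2_eq hρ hσ']
    exact trace_sq_mono hRT'R hRTR (key_psd hρ hσ hσ' hle hsupp)
  refine ⟨hfirst, ?_⟩
  by_cases hpos : 0 < expD2 ρ σ'
  · exact Real.logb_le_logb_of_le (one_lt_two) hpos hfirst
  · have h0 : expD2 ρ σ' = 0 :=
      le_antisymm (not_lt.mp hpos) (expD2_nonneg hρ hσ')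
    unfold expD2 at h0
    set S' := mpow (-(4:ℝ)⁻¹) σ' with hS'def
    have hS'H : S'.IsHermitian := (mpow_posSemidef hσ' _).isHermitian
    have hN : (S' * ρ * S').PosSemidef := by
      have := hρ.mul_mul_conjTranspose_same S'
      rwa [hS'H.eq] at this
    have hN0 : S' * ρ * S' = 0 := by
      have h1 : ∑ j, ∑ i, Complex.normSq ((S' * ρ * S') i j) = 0 := by
        rw [← trace_sq_re_eq hN.isHermitian]
        exact h0
      have h2 : ∀ i j, (S' * ρ * S') i j = 0 := by
        intro i j
        have h3 := (Finset.sum_eq_zero_iff_of_nonneg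
          (fun j _ => Finset.sum_nonneg fun i _ => Complex.normSq_nonneg _)).mp h1 j
          (Finset.mem_univ j)
        have h4 := (Finset.sum_eq_zero_iff_of_nonneg
          (fun i _ => Complex.normSq_nonneg _)).mp h3 i (Finset.mem_univ i)
        exact Complex.normSq_eq_zero.mp h4
      ext i j
      simpa using h2 i j
    have hρu : ∀ j, ρ *ᵥ ⇑(hσ'.1.eigenvectorBasis j) = 0 := by
      intro j
      by_cases h : hσ'.1.eigenvalues j = 0
      · apply hsupp
        apply psd_le_mulVec_zero hσ hle
        rw [hσ'.1.mulVec_eigenvectorBasis j, h, zero_smul]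
      · set b := ⇑(hσ'.1.eigenvectorBasis j) with hbdef
        have hSb : S' *ᵥ b
            = (Complex.ofReal (if hσ'.1.eigenvalues j = 0 then (0:ℝ)
                else (hσ'.1.eigenvalues j) ^ (-(4:ℝ)⁻¹))) • b :=
          mFun_mulVec_basis hσ'.1 _ j
        rw [if_neg h] at hSb
        set t : ℝ := (hσ'.1.eigenvalues j) ^ (-(4:ℝ)⁻¹) with htdef
        have ht : 0 < t :=
          Real.rpow_pos_of_pos (lt_of_le_of_ne (hσ'.eigenvalues_nonneg j) (Ne.symm h)) _
        have hq : dotProduct (star b) ((S' * ρ * S') *ᵥ b) = 0 := by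
          rw [hN0, Matrix.zero_mulVec, dotProduct_zero]
        have hq2 : dotProduct (star (S' *ᵥ b)) (ρ *ᵥ (S' *ᵥ b)) = 0 := by
          have h3 := dot_conj S' ρ b
          rw [hS'H.eq] at h3
          rw [← h3]
          exact hq
        rw [hSb, star_smul, smul_dotProduct, Matrix.mulVec_smul,
          dotProduct_smul] at hq2
        have ht0 : (t:ℂ) ≠ 0 := by exact_mod_cast ht.ne'
        have hq3 : dotProduct (star b) (ρ *ᵥ b) = 0 := by
          simp only [smul_eq_mul, Complex.star_def, Complex.conj_ofReal, mul_eq_zero] at hq2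
          rcases hq2 with h5 | hq2
          · exact absurd h5 ht0
          rcases hq2 with h5 | hq2
          · exact absurd h5 ht0
          exact hq2
        exact psd_mulVec_eq_zero hρ hq3
    have hρ0 : ρ = 0 := by
      have hU : ρ * (hσ'.1.eigenvectorUnitary : Matrix n n ℂ) = 0 := by
        ext k j
        have := congrFun (hρu j) k
        simpa [Matrix.mul_apply, Matrix.mulVec, dotProduct,
          Matrix.IsHermitian.eigenvectorUnitary_apply] using this
      calc ρ = ρ * ((hσ'.1.eigenvectorUnitary : Matrix n n ℂ)
              * star (hσ'.1.eigenvectorUnitary : Matrix n n ℂ)) := by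
            rw [eigU_mul_star hσ'.1, mul_one]
        _ = (ρ * (hσ'.1.eigenvectorUnitary : Matrix n n ℂ))
              * star (hσ'.1.eigenvectorUnitary : Matrix n n ℂ) := by rw [mul_assoc]
        _ = 0 := by rw [hU, Matrix.zero_mul]
    rw [hρ0]
    simp [D2, expD2]
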